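/- arXiv:2205.15100 — 2 statements merged into one kernel-verified Lean document; each statement's English description precedes it below -/
import Mathlib

section
/- Let P-hat and P be orthogonal projections on R^d, and suppose P-hat decomposes as P-hat = P-hat_{≤r} + P-hat_{>r} with P-hat_{≤r}, P-hat_{>r} orthogonal projections having mutually orthogonal ranges contained in Im(P-hat). Then for any vector α in the range of P, ‖(P-hat − P)α‖ ≤ 2 ‖(P-hat_{≤r} − P)α‖ ≤ 2 ‖P-hat_{≤r} − P‖_op ‖α‖. -/
open Matrix

noncomputable def enorm4 {m : Type*} [Fintype m] (v : m → ℝ) : ℝ :=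
  Real.sqrt (v ⬝ᵥ v)

noncomputable def opNorm4 {m n : ℕ} (M : Matrix (Fin m) (Fin n) ℝ) : ℝ :=
  ‖LinearMap.toContinuousLinearMap (Matrix.toEuclideanLin M)‖

lemma enorm4_eq_norm {m : Type*} [Fintype m] (v : m → ℝ) :
    enorm4 v = ‖((WithLp.equiv 2 (m → ℝ)).symm v : EuclideanSpace ℝ m)‖ := by
  rw [enorm4, EuclideanSpace.norm_eq]
  congr 1
  rw [dotProduct]
  refine Finset.sum_congr rfl fun i _ => ?_
  simp [Real.norm_eq_abs, sq_abs, sq]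

lemma enorm4_sq {m : Type*} [Fintype m] (v : m → ℝ) :
    enorm4 v * enorm4 v = v ⬝ᵥ v := by
  rw [enorm4]
  exact Real.mul_self_sqrt (Finset.sum_nonneg fun i _ => mul_self_nonneg _)

lemma dot_le_enorm4 {m : Type*} [Fintype m] (v w : m → ℝ) :
    v ⬝ᵥ w ≤ enorm4 v * enorm4 w := by
  have h := real_inner_le_norm ((WithLp.equiv 2 (m → ℝ)).symm v : EuclideanSpace ℝ m)
    ((WithLp.equiv 2 (m → ℝ)).symm w)
  rw [enorm4_eq_norm, enorm4_eq_norm]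
  simpa [EuclideanSpace.inner_eq_star_dotProduct, dotProduct_comm] using h

lemma proj_contract {d : ℕ} (Q : Matrix (Fin d) (Fin d) ℝ)
    (hs : Q.IsSymm) (hi : Q * Q = Q) (v : Fin d → ℝ) :
    enorm4 (Q *ᵥ v) ≤ enorm4 v := by
  have h1 : (Q *ᵥ v) ⬝ᵥ (Q *ᵥ v) = v ⬝ᵥ (Q *ᵥ v) := by
    rw [Matrix.dotProduct_mulVec, ← Matrix.mulVec_transpose, hs.eq,
      Matrix.mulVec_mulVec, hi, dotProduct_comm]
  have h2 : enorm4 (Q *ᵥ v) * enorm4 (Q *ᵥ v) ≤ enorm4 v * enorm4 (Q *ᵥ v) := by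
    rw [enorm4_sq, h1]; exact dot_le_enorm4 _ _
  rcases le_or_gt (enorm4 (Q *ᵥ v)) 0 with h | h
  · exact h.trans (Real.sqrt_nonneg _)
  · exact le_of_mul_le_mul_right h2 h

/-- If `P̂ = P̂_{≤r} + P̂_{>r}` with `P̂_{≤r}, P̂_{>r}` orthogonal projections
having mutually orthogonal ranges, and `P` is an orthogonal projection, then for
any `α` in the range of `P`,
`‖(P̂ − P)α‖ ≤ 2‖(P̂_{≤r} − P)α‖ ≤ 2‖P̂_{≤r} − P‖_op ‖α‖`. -/
theorem proj_diff_norm_bound {d : ℕ}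
    (P Phat Ple Pgt : Matrix (Fin d) (Fin d) ℝ)
    (hPsymm : P.IsSymm) (hPidem : P * P = P)
    (hHatsymm : Phat.IsSymm) (hHatidem : Phat * Phat = Phat)
    (hLesymm : Ple.IsSymm) (hLeidem : Ple * Ple = Ple)
    (hGtsymm : Pgt.IsSymm) (hGtidem : Pgt * Pgt = Pgt)
    (hdecomp : Phat = Ple + Pgt) (horth : Ple * Pgt = 0)
    (α : Fin d → ℝ) (hα : P *ᵥ α = α) :
    enorm4 ((Phat - P) *ᵥ α) ≤ 2 * enorm4 ((Ple - P) *ᵥ α) ∧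
    2 * enorm4 ((Ple - P) *ᵥ α) ≤ 2 * opNorm4 (Ple - P) * enorm4 α := by
  constructor
  · -- Pgt α = -Pgt (Ple - P) α
    have hGL : Pgt * Ple = 0 := by
      have := congrArg Matrix.transpose horth
      simpa [Matrix.transpose_mul, hLesymm.eq, hGtsymm.eq] using this
    have hkey : Pgt *ᵥ α = -((Pgt * (Ple - P)) *ᵥ α) := by
      rw [Matrix.mul_sub, hGL, zero_sub, Matrix.neg_mulVec, neg_neg,
        ← Matrix.mulVec_mulVec, hα]
    have hsplit : (Phat - P) *ᵥ α = (Ple - P) *ᵥ α + Pgt *ᵥ α := by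
      rw [hdecomp]
      rw [show Ple + Pgt - P = (Ple - P) + Pgt by abel, Matrix.add_mulVec]
    have hbound : enorm4 (Pgt *ᵥ α) ≤ enorm4 ((Ple - P) *ᵥ α) := by
      rw [hkey]
      have : enorm4 (-((Pgt * (Ple - P)) *ᵥ α)) = enorm4 ((Pgt * (Ple - P)) *ᵥ α) := by
        simp [enorm4_eq_norm]
      rw [this, ← Matrix.mulVec_mulVec]
      exact proj_contract Pgt hGtsymm hGtidem _
    have htri : enorm4 ((Ple - P) *ᵥ α + Pgt *ᵥ α) ≤
        enorm4 ((Ple - P) *ᵥ α) + enorm4 (Pgt *ᵥ α) := by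
      simp only [enorm4_eq_norm]
      rw [show (WithLp.equiv 2 (Fin d → ℝ)).symm ((Ple - P) *ᵥ α + Pgt *ᵥ α)
        = (WithLp.equiv 2 (Fin d → ℝ)).symm ((Ple - P) *ᵥ α)
          + (WithLp.equiv 2 (Fin d → ℝ)).symm (Pgt *ᵥ α) by rfl]
      exact norm_add_le _ _
    rw [hsplit]
    calc enorm4 ((Ple - P) *ᵥ α + Pgt *ᵥ α)
        ≤ enorm4 ((Ple - P) *ᵥ α) + enorm4 (Pgt *ᵥ α) := htri
      _ ≤ enorm4 ((Ple - P) *ᵥ α) + enorm4 ((Ple - P) *ᵥ α) := by linarith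
      _ = 2 * enorm4 ((Ple - P) *ᵥ α) := by ring
  · have h := (LinearMap.toContinuousLinearMap
      (Matrix.toEuclideanLin (Ple - P))).le_opNorm
      ((WithLp.equiv 2 (Fin d → ℝ)).symm α)
    have happ : (LinearMap.toContinuousLinearMap (Matrix.toEuclideanLin (Ple - P)))
        ((WithLp.equiv 2 (Fin d → ℝ)).symm α)
        = (WithLp.equiv 2 (Fin d → ℝ)).symm ((Ple - P) *ᵥ α) := by
      simp [LinearMap.coe_toContinuousLinearMap', Matrix.toEuclideanLin_apply,
        Matrix.sub_mulVec]
    rw [happ] at h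
    rw [mul_assoc]
    refine mul_le_mul_of_nonneg_left ?_ (by norm_num : (0:ℝ) ≤ 2)
    rw [enorm4_eq_norm, enorm4_eq_norm, opNorm4]
    exact h
end

section
/- Let Y = Xᵀ B α + η where X ∈ R^{d×n}, B ∈ R^{d×r} has orthonormal columns, α ∈ R^r, η ∈ R^n, and let B-hat ∈ R^{d×r̃} have orthonormal columns with Bᵀ-hat X Xᵀ B-hat invertible. Define α-hat = (B-hatᵀ X Xᵀ B-hat)^{-1} B-hatᵀ X Y. Then B-hat α-hat − B α = (P-hat − P)ᾱ + B-hat (B-hatᵀ X Xᵀ B-hat)^{-1} B-hatᵀ X Xᵀ (P − P-hat) ᾱ + B-hat (B-hatᵀ X Xᵀ B-hat)^{-1} B-hatᵀ X η, where P = B Bᵀ, P-hat = B-hat B-hatᵀ, and ᾱ = B α (viewing ᾱ as the d-dimensional vector with Pᾱ = ᾱ). -/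
open Matrix

/-- Error decomposition for the least-squares estimate in an estimated
representation: with `Y = Xᵀ B α + η`, `α̂ = (B̂ᵀXXᵀB̂)⁻¹ B̂ᵀ X Y`, `P = BBᵀ`,
`P̂ = B̂B̂ᵀ` and `ᾱ = Bα`,
`B̂α̂ − Bα = (P̂ − P)ᾱ + B̂(B̂ᵀXXᵀB̂)⁻¹ B̂ᵀXXᵀ(P − P̂)ᾱ + B̂(B̂ᵀXXᵀB̂)⁻¹ B̂ᵀXη`. -/
theorem lsq_error_decomposition {d n r rt : ℕ}
    (X : Matrix (Fin d) (Fin n) ℝ)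
    (B : Matrix (Fin d) (Fin r) ℝ) (hB : Bᵀ * B = 1)
    (Bhat : Matrix (Fin d) (Fin rt) ℝ) (hBhat : Bhatᵀ * Bhat = 1)
    (α : Fin r → ℝ) (η : Fin n → ℝ)
    (Y : Fin n → ℝ) (hY : Y = Xᵀ *ᵥ (B *ᵥ α) + η)
    (hinv : IsUnit (Bhatᵀ * X * Xᵀ * Bhat))
    (αhat : Fin rt → ℝ)
    (hαhat : αhat = (Bhatᵀ * X * Xᵀ * Bhat)⁻¹ *ᵥ (Bhatᵀ *ᵥ (X *ᵥ Y)))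
    (P Phat : Matrix (Fin d) (Fin d) ℝ)
    (hP : P = B * Bᵀ) (hPhat : Phat = Bhat * Bhatᵀ)
    (abar : Fin d → ℝ) (habar : abar = B *ᵥ α) :
    Bhat *ᵥ αhat - B *ᵥ α
      = (Phat - P) *ᵥ abar
        + (Bhat * (Bhatᵀ * X * Xᵀ * Bhat)⁻¹ * (Bhatᵀ * X * Xᵀ * (P - Phat))) *ᵥ abar
        + Bhat *ᵥ ((Bhatᵀ * X * Xᵀ * Bhat)⁻¹ *ᵥ (Bhatᵀ *ᵥ (X *ᵥ η))) := by
  subst hY hαhat hP hPhat habar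
  have hMu : (Bhatᵀ * X * Xᵀ * Bhat)⁻¹ * (Bhatᵀ * X * Xᵀ * Bhat) = 1 :=
    nonsing_inv_mul _ ((isUnit_iff_isUnit_det _).mp hinv)
  set Minv := (Bhatᵀ * X * Xᵀ * Bhat)⁻¹ with hMinv
  have hM' : ∀ {m} (C : Matrix (Fin rt) (Fin m) ℝ),
      Minv * (Bhatᵀ * (X * (Xᵀ * (Bhat * C)))) = C := by
    intro m C
    calc Minv * (Bhatᵀ * (X * (Xᵀ * (Bhat * C))))
        = (Minv * (Bhatᵀ * X * Xᵀ * Bhat)) * C := by simp only [Matrix.mul_assoc]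
      _ = C := by rw [hMu]; simp
  have hB' : ∀ {m} (C : Matrix (Fin r) (Fin m) ℝ), Bᵀ * (B * C) = C := by
    intro m C; rw [← Matrix.mul_assoc, hB]; simp
  simp only [mulVec_add, mulVec_mulVec, sub_mulVec, add_mulVec]
  have key : Bhat * (Minv * (Bhatᵀ * (X * (Xᵀ * B)))) - B
      = (Bhat * Bhatᵀ - B * Bᵀ) * B
        + Bhat * Minv * (Bhatᵀ * X * Xᵀ * (B * Bᵀ - Bhat * Bhatᵀ)) * B := by
    simp only [Matrix.mul_sub, Matrix.sub_mul, Matrix.mul_assoc, hM', hB', hB,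
      Matrix.mul_one]
    abel
  rw [add_sub_right_comm, ← sub_mulVec, key, add_mulVec]
end
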